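/- Let R > 0 and 0 < a < b < 1. Then the quadratic equation (a + R²b)u² − (1 + a² + R² + R²b²)u + (a + R²b) = 0 has two distinct positive real roots whose product equals 1, and its smaller root v₀ satisfies a < v₀ < b. -/

import Mathlib

lemma root_eq_aux (A B s : ℝ) (hA : A ≠ 0) (hs2 : s ^ 2 = B ^ 2 - 4 * A ^ 2) :
    A * ((B - s) / (2 * A)) ^ 2 - B * ((B - s) / (2 * A)) + A = 0 := by
  field_simp
  linear_combination hs2

lemma root_eq_aux' (A B s : ℝ) (hA : A ≠ 0) (hs2 : s ^ 2 = B ^ 2 - 4 * A ^ 2) :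
    A * ((B + s) / (2 * A)) ^ 2 - B * ((B + s) / (2 * A)) + A = 0 := by
  field_simp
  linear_combination hs2

theorem stmt_8 (R a b : ℝ) (hR : R > 0) (ha : 0 < a) (hab : a < b) (hb : b < 1) :
    ∃ v₀ v₁ : ℝ, v₀ < v₁ ∧ 0 < v₀ ∧ 0 < v₁ ∧ v₀ * v₁ = 1 ∧
      ((a + R ^ 2 * b) * v₀ ^ 2 - (1 + a ^ 2 + R ^ 2 + R ^ 2 * b ^ 2) * v₀ + (a + R ^ 2 * b) = 0) ∧
      ((a + R ^ 2 * b) * v₁ ^ 2 - (1 + a ^ 2 + R ^ 2 + R ^ 2 * b ^ 2) * v₁ + (a + R ^ 2 * b) = 0) ∧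
      (∀ u : ℝ,
        (a + R ^ 2 * b) * u ^ 2 - (1 + a ^ 2 + R ^ 2 + R ^ 2 * b ^ 2) * u + (a + R ^ 2 * b) = 0 →
        u = v₀ ∨ u = v₁) ∧
      a < v₀ ∧ v₀ < b := by
  have hbpos : 0 < b := ha.trans hab
  have hApos : 0 < a + R ^ 2 * b := by
    have := mul_pos (pow_pos hR 2) hbpos; linarith
  set A : ℝ := a + R ^ 2 * b with hA
  set B : ℝ := 1 + a ^ 2 + R ^ 2 + R ^ 2 * b ^ 2 with hB
  have hB2A : 0 < B - 2 * A := by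
    have h1 : B - 2 * A = (1 - a) ^ 2 + R ^ 2 * (1 - b) ^ 2 := by rw [hA, hB]; ring
    have h2 : 0 < (1 - a) ^ 2 + R ^ 2 * (1 - b) ^ 2 := by
      have : 0 < R ^ 2 * (1 - b) ^ 2 :=
        mul_pos (pow_pos hR 2) (pow_pos (by linarith) 2)
      nlinarith [sq_nonneg (1 - a)]
    linarith
  have hBpos : 0 < B := by linarith
  have hD : 0 < B ^ 2 - 4 * A ^ 2 := by nlinarith
  set s : ℝ := Real.sqrt (B ^ 2 - 4 * A ^ 2) with hs
  have hs0 : 0 < s := Real.sqrt_pos.mpr hD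
  have hs2 : s ^ 2 = B ^ 2 - 4 * A ^ 2 := Real.sq_sqrt hD.le
  clear_value s
  have hsB : s < B := by nlinarith
  have h2A : (0:ℝ) < 2 * A := by linarith
  have hAne : A ≠ 0 := hApos.ne'
  refine ⟨(B - s) / (2 * A), (B + s) / (2 * A), ?_, ?_, ?_, ?_, ?_, ?_, ?_, ?_, ?_⟩
  · exact div_lt_div_of_pos_right (by linarith) h2A
  · exact div_pos (by linarith) h2A
  · exact div_pos (by linarith) h2A
  · field_simp
    linear_combination -hs2
  · have := root_eq_aux A B s hAne hs2; linarith
  · have := root_eq_aux' A B s hAne hs2; linarith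
  · intro u hu
    have hu' : A * u ^ 2 - B * u + A = 0 := hu
    have h : (2 * A * u - (B - s)) * (2 * A * u - (B + s)) = 0 := by
      linear_combination 4 * A * hu' - hs2
    rcases mul_eq_zero.mp h with h | h
    · left; field_simp; linarith
    · right; field_simp; linarith
  · rw [lt_div_iff₀ h2A]
    have hkey : (B - 2 * A * a) ^ 2 - s ^ 2 = 4 * A * (R ^ 2 * (b - a) * (1 - a * b)) := by
      rw [hs2, hA, hB]; ring
    have hab1 : 0 < 1 - a * b := by nlinarith
    have hpos : 0 < 4 * A * (R ^ 2 * (b - a) * (1 - a * b)) := by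
      have h1 : 0 < b - a := by linarith
      positivity
    have h1 : 0 < B - 2 * A * a := by nlinarith
    have h2 : s < B - 2 * A * a :=
      lt_of_pow_lt_pow_left₀ 2 h1.le (by linarith)
    linarith
  · rw [div_lt_iff₀ h2A]
    have hkey : s ^ 2 - (B - 2 * A * b) ^ 2 = 4 * A * ((b - a) * (1 - a * b)) := by
      rw [hs2, hA, hB]; ring
    have hab1 : 0 < 1 - a * b := by nlinarith
    have hpos : 0 < 4 * A * ((b - a) * (1 - a * b)) := by
      have h1 : 0 < b - a := by linarith
      positivity
    have h2 : B - 2 * A * b < s :=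
      lt_of_pow_lt_pow_left₀ 2 hs0.le (by linarith)
    linarith
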